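/- Suppose Q̄₁, Q̄₂, R̄₁, R̄₂ : [0,∞) → [0,∞) satisfy: R̄₁ + Q̄₁ = R̄₂ + Q̄₂ pointwise; R̄₁, R̄₂ are continuous with R̄_i(t) - R̄_i(s) = ∫_s^t φ(Q̄_i(v)) dv for a fixed nondecreasing measurable φ : [0,∞) → [0,∞); Q̄₁, Q̄₂ are càdlàg with Q̄₁(0) = Q̄₂(0). Then Q̄₁ = Q̄₂ and R̄₁ = R̄₂. -/

import Mathlib

open MeasureTheory Set Filter

/-- A right-continuous function on ℝ is measurable. -/
lemma measurable_of_rc (Q : ℝ → ℝ) (hrc : ∀ x : ℝ, ContinuousWithinAt Q (Set.Ici x) x) :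
    Measurable Q := by
  have key : ∀ v : ℝ, Tendsto (fun n : ℕ => Q ((⌈v * 2 ^ n⌉ : ℝ) / 2 ^ n)) atTop (nhds (Q v)) := by
    intro v
    apply (hrc v).tendsto.comp
    rw [tendsto_nhdsWithin_iff]
    constructor
    · have h1 : Tendsto (fun n : ℕ => v + (2:ℝ)⁻¹ ^ n) atTop (nhds v) := by
        simpa using tendsto_const_nhds.add
          (tendsto_pow_atTop_nhds_zero_of_lt_one (by norm_num) (by norm_num : (2:ℝ)⁻¹ < 1))
      refine tendsto_of_tendsto_of_tendsto_of_le_of_le tendsto_const_nhds h1 ?_ ?_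
      · intro n
        have := Int.le_ceil (v * 2 ^ n)
        have h2 : (0:ℝ) < 2 ^ n := by positivity
        show v ≤ (⌈v * 2 ^ n⌉ : ℝ) / 2 ^ n
        rw [le_div_iff₀ h2]
        linarith
      · intro n
        have hc := Int.ceil_lt_add_one (v * 2 ^ n)
        have h2 : (0:ℝ) < 2 ^ n := by positivity
        have h3 : (2:ℝ)⁻¹ ^ n * 2 ^ n = 1 := by
          rw [← mul_pow]; norm_num
        show (⌈v * 2 ^ n⌉ : ℝ) / 2 ^ n ≤ v + 2⁻¹ ^ n
        rw [div_le_iff₀ h2]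
        nlinarith
    · filter_upwards with n
      have := Int.le_ceil (v * 2 ^ n)
      have h2 : (0:ℝ) < 2 ^ n := by positivity
      rw [mem_Ici, le_div_iff₀ h2]
      linarith
  have hmeas : ∀ n : ℕ, Measurable fun v : ℝ => Q ((⌈v * 2 ^ n⌉ : ℝ) / 2 ^ n) := by
    intro n
    exact (measurable_of_countable (fun k : ℤ => Q ((k : ℝ) / 2 ^ n))).comp
      (Int.measurable_ceil.comp (measurable_id.mul_const _))
  exact measurable_of_tendsto_metrizable hmeas (tendsto_pi_nhds.2 key)

/-- A càdlàg function is bounded above on compact intervals. -/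
lemma bddAbove_of_cadlag (Q : ℝ → ℝ)
    (hrc : ∀ x : ℝ, ContinuousWithinAt Q (Set.Ici x) x)
    (hll : ∀ x : ℝ, ∃ l, Tendsto Q (nhdsWithin x (Set.Iio x)) (nhds l))
    (a b : ℝ) : ∃ M : ℝ, ∀ v ∈ Set.Icc a b, Q v ≤ M := by
  have hloc : ∀ x : ℝ, ∃ C : ℝ, ∀ᶠ y in nhds x, Q y ≤ C := by
    intro x
    obtain ⟨l, hl⟩ := hll x
    have h1 : ∀ᶠ y in nhdsWithin x (Set.Ici x), Q y ≤ max (Q x) l + 1 := by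
      filter_upwards [(hrc x).tendsto (Filter.Tendsto.eventually_le_const
        (by linarith [le_max_left (Q x) l] : Q x < max (Q x) l + 1) tendsto_id)] with y hy
      exact hy
    have h2 : ∀ᶠ y in nhdsWithin x (Set.Iio x), Q y ≤ max (Q x) l + 1 := by
      filter_upwards [hl (Filter.Tendsto.eventually_le_const
        (by linarith [le_max_right (Q x) l] : l < max (Q x) l + 1) tendsto_id)] with y hy
      exact hy
    refine ⟨max (Q x) l + 1, ?_⟩
    rw [← nhdsLT_sup_nhdsGE x]
    exact ⟨h2, h1⟩
  choose C hC using hloc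
  obtain ⟨t, _, hcov⟩ := isCompact_Icc.elim_nhds_subcover
    (fun x => {y : ℝ | Q y ≤ C x}) (fun x _ => hC x)
  have hb : BddAbove (⋃ x ∈ t, Set.Iic (C x)) := by
    exact (Set.Finite.bddAbove_biUnion t.finite_toSet).2 fun i _ => bddAbove_Iic
  obtain ⟨M, hM⟩ := hb
  refine ⟨M, fun v hv => ?_⟩
  obtain ⟨x, hx, hvx⟩ := Set.mem_iUnion₂.1 (hcov hv)
  exact hM (Set.mem_iUnion₂.2 ⟨x, hx, hvx⟩)

lemma key_le (φ : ℝ → ℝ) (hφm : Monotone φ) (hφnn : ∀ q, 0 ≤ φ q)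
    (Q₁ Q₂ R₁ R₂ : ℝ → ℝ)
    (hcons : ∀ t : ℝ, 0 ≤ t → R₁ t + Q₁ t = R₂ t + Q₂ t)
    (hR₁c : Continuous R₁) (hR₂c : Continuous R₂)
    (hR₁ : ∀ s t : ℝ, 0 ≤ s → s ≤ t → R₁ t - R₁ s = ∫ v in s..t, φ (Q₁ v))
    (hR₂ : ∀ s t : ℝ, 0 ≤ s → s ≤ t → R₂ t - R₂ s = ∫ v in s..t, φ (Q₂ v))
    (hQ₁rc : ∀ x : ℝ, ContinuousWithinAt Q₁ (Set.Ici x) x)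
    (hQ₂rc : ∀ x : ℝ, ContinuousWithinAt Q₂ (Set.Ici x) x)
    (hQ₁ll : ∀ x : ℝ, ∃ l, Tendsto Q₁ (nhdsWithin x (Set.Iio x)) (nhds l))
    (hQ₂ll : ∀ x : ℝ, ∃ l, Tendsto Q₂ (nhdsWithin x (Set.Iio x)) (nhds l))
    (h0 : Q₁ 0 = Q₂ 0) :
    ∀ t : ℝ, 0 ≤ t → R₂ t - R₁ t ≤ 0 := by
  intro t ht
  by_contra hcon
  push_neg at hcon
  set D : ℝ → ℝ := fun v => R₂ v - R₁ v with hD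
  have hDc : Continuous D := hR₂c.sub hR₁c
  have hD0 : D 0 = 0 := by
    have := hcons 0 le_rfl
    simp only [hD]
    linarith
  set S : Set ℝ := Set.Icc 0 t ∩ D ⁻¹' (Set.Iic 0) with hS
  have hSne : S.Nonempty := ⟨0, ⟨le_rfl, ht⟩, by simp [hD0]⟩
  have hSb : BddAbove S := BddAbove.inter_of_left bddAbove_Icc
  have hScl : IsClosed S := isClosed_Icc.inter (isClosed_Iic.preimage hDc)
  set s := sSup S with hs
  have hsS : s ∈ S := hScl.csSup_mem hSne hSb
  obtain ⟨⟨hs0, hst⟩, hsD⟩ := hsS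
  have hsD : D s ≤ 0 := hsD
  have hst' : s < t := by
    rcases lt_or_eq_of_le hst with h | h
    · exact h
    · exfalso; rw [h] at hsD; exact absurd hcon (not_lt.2 hsD)
  -- On (s, t], D > 0, hence Q₂ ≤ Q₁
  have hgt : ∀ v ∈ Set.Ioc s t, Q₂ v ≤ Q₁ v := by
    intro v ⟨hv1, hv2⟩
    have hv0 : (0:ℝ) ≤ v := le_trans hs0 hv1.le
    have hvD : 0 < D v := by
      by_contra hvD
      push_neg at hvD
      exact absurd (le_csSup hSb (⟨⟨hv0, hv2⟩, hvD⟩ : v ∈ S)) (not_le.2 hv1)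
    have := hcons v hv0
    simp only [hD] at hvD
    linarith
  -- Integrability
  obtain ⟨M₁, hM₁⟩ := bddAbove_of_cadlag Q₁ hQ₁rc hQ₁ll s t
  obtain ⟨M₂, hM₂⟩ := bddAbove_of_cadlag Q₂ hQ₂rc hQ₂ll s t
  have hmeas₁ : Measurable fun v => φ (Q₁ v) :=
    hφm.measurable.comp (measurable_of_rc Q₁ hQ₁rc)
  have hmeas₂ : Measurable fun v => φ (Q₂ v) :=
    hφm.measurable.comp (measurable_of_rc Q₂ hQ₂rc)
  have hint : ∀ (Q : ℝ → ℝ) (M : ℝ), (∀ v ∈ Set.Icc s t, Q v ≤ M) →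
      Measurable (fun v => φ (Q v)) → IntegrableOn (fun v => φ (Q v)) (Set.Ioc s t) := by
    intro Q M hM hm
    refine Integrable.mono' (integrableOn_const (C := φ M) measure_Ioc_lt_top.ne)
      hm.aestronglyMeasurable ?_
    filter_upwards [ae_restrict_mem measurableSet_Ioc] with v hv
    rw [Real.norm_eq_abs, abs_of_nonneg (hφnn _)]
    exact hφm (hM v (Set.Ioc_subset_Icc_self hv))
  have hI₁ : IntegrableOn (fun v => φ (Q₁ v)) (Set.Ioc s t) := hint Q₁ M₁ hM₁ hmeas₁
  have hI₂ : IntegrableOn (fun v => φ (Q₂ v)) (Set.Ioc s t) := hint Q₂ M₂ hM₂ hmeas₂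
  -- The comparison
  have e₁ := hR₁ s t hs0 hst
  have e₂ := hR₂ s t hs0 hst
  rw [intervalIntegral.integral_of_le hst] at e₁ e₂
  have hmono : ∫ v in Set.Ioc s t, φ (Q₂ v) ≤ ∫ v in Set.Ioc s t, φ (Q₁ v) :=
    setIntegral_mono_on hI₂ hI₁ measurableSet_Ioc (fun v hv => hφm (hgt v hv))
  have hts : D t ≤ D s := by simp only [hD]; linarith
  simp only [hD] at hts hsD
  linarith

theorem stmt_18 (φ : ℝ → ℝ) (hφm : Monotone φ) (hφnn : ∀ q, 0 ≤ φ q)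
    (Q₁ Q₂ R₁ R₂ : ℝ → ℝ)
    (hQ₁nn : ∀ t, 0 ≤ Q₁ t) (hQ₂nn : ∀ t, 0 ≤ Q₂ t)
    (hR₁nn : ∀ t, 0 ≤ R₁ t) (hR₂nn : ∀ t, 0 ≤ R₂ t)
    (hcons : ∀ t : ℝ, 0 ≤ t → R₁ t + Q₁ t = R₂ t + Q₂ t)
    (hR₁c : Continuous R₁) (hR₂c : Continuous R₂)
    (hR₁ : ∀ s t : ℝ, 0 ≤ s → s ≤ t → R₁ t - R₁ s = ∫ v in s..t, φ (Q₁ v))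
    (hR₂ : ∀ s t : ℝ, 0 ≤ s → s ≤ t → R₂ t - R₂ s = ∫ v in s..t, φ (Q₂ v))
    (hQ₁rc : ∀ x : ℝ, ContinuousWithinAt Q₁ (Set.Ici x) x)
    (hQ₂rc : ∀ x : ℝ, ContinuousWithinAt Q₂ (Set.Ici x) x)
    (hQ₁ll : ∀ x : ℝ, ∃ l, Tendsto Q₁ (nhdsWithin x (Set.Iio x)) (nhds l))
    (hQ₂ll : ∀ x : ℝ, ∃ l, Tendsto Q₂ (nhdsWithin x (Set.Iio x)) (nhds l))
    (h0 : Q₁ 0 = Q₂ 0) :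
    ∀ t : ℝ, 0 ≤ t → Q₁ t = Q₂ t ∧ R₁ t = R₂ t := by
  intro t ht
  have h1 := key_le φ hφm hφnn Q₁ Q₂ R₁ R₂ hcons hR₁c hR₂c hR₁ hR₂
    hQ₁rc hQ₂rc hQ₁ll hQ₂ll h0 t ht
  have h2 := key_le φ hφm hφnn Q₂ Q₁ R₂ R₁ (fun v hv => (hcons v hv).symm) hR₂c hR₁c hR₂ hR₁
    hQ₂rc hQ₁rc hQ₂ll hQ₁ll h0.symm t ht
  have hc := hcons t ht
  constructor <;> linarith
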